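/- arXiv:2509.16451 — 5 statements merged into one kernel-verified Lean document; each statement's English description precedes it below -/
import Mathlib

section
/- Let p be a positive integer, L, U ∈ ℝ^p with L_k ≤ U_k for all k, and consider the box uncertainty set 𝒰 = {u ∈ ℝ^p : L_k ≤ u_k ≤ U_k for all k}. Let a ∈ ℝ^n, b ∈ ℝ, d ∈ ℝ^p, z ∈ ℝ^n, and V ∈ ℝ^{n×p}, defining the affine decision rule x(u) = z + V u. If there exist α, β ∈ ℝ^p with α ≥ 0, β ≥ 0, β − α = Vᵀa − d, and aᵀz + Uᵀβ − Lᵀα ≤ b, then aᵀ x(u) ≤ b + dᵀu for every u ∈ 𝒰. -/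
open Matrix

/-- **Bounded support (box) robust counterpart.** If `α, β ≥ 0`, `β − α = Vᵀa − d`, and
`aᵀz + Uᵀβ − Lᵀα ≤ b`, then the affine decision rule `x(u) = z + V u` satisfies
`aᵀ x(u) ≤ b + dᵀ u` for all `u` in the box `{u : L ≤ u ≤ U}`. -/
theorem box_robust_counterpart {p n : ℕ} (hp : 0 < p)
    (L U : Fin p → ℝ) (hLU : ∀ k, L k ≤ U k)
    (a : Fin n → ℝ) (b : ℝ) (d : Fin p → ℝ)
    (z : Fin n → ℝ) (V : Matrix (Fin n) (Fin p) ℝ)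
    (α β : Fin p → ℝ)
    (hα : ∀ k, 0 ≤ α k) (hβ : ∀ k, 0 ≤ β k)
    (hbal : β - α = Vᵀ *ᵥ a - d)
    (hrc : a ⬝ᵥ z + U ⬝ᵥ β - L ⬝ᵥ α ≤ b) :
    ∀ u : Fin p → ℝ, (∀ k, L k ≤ u k ∧ u k ≤ U k) →
      a ⬝ᵥ (z + V *ᵥ u) ≤ b + d ⬝ᵥ u := by
  intro u hu
  have hVa : Vᵀ *ᵥ a = β - α + d := by rw [hbal]; ring
  have key : a ⬝ᵥ (V *ᵥ u) = (Vᵀ *ᵥ a) ⬝ᵥ u := by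
    simp only [dotProduct, mulVec, dotProduct, transpose_apply, Finset.mul_sum,
      Finset.sum_mul]
    rw [Finset.sum_comm]
    apply Finset.sum_congr rfl
    intro k _
    apply Finset.sum_congr rfl
    intro i _
    ring
  have hβu : β ⬝ᵥ u ≤ U ⬝ᵥ β := by
    simp only [dotProduct]
    apply Finset.sum_le_sum
    intro k _
    rw [mul_comm (U k)]
    exact mul_le_mul_of_nonneg_left (hu k).2 (hβ k)
  have hαu : L ⬝ᵥ α ≤ α ⬝ᵥ u := by
    simp only [dotProduct]
    apply Finset.sum_le_sum
    intro k _
    rw [mul_comm (L k)]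
    exact mul_le_mul_of_nonneg_left (hu k).1 (hα k)
  have expand : a ⬝ᵥ (z + V *ᵥ u) = a ⬝ᵥ z + β ⬝ᵥ u - α ⬝ᵥ u + d ⬝ᵥ u := by
    rw [dotProduct_add, key, hVa]
    simp [add_dotProduct, sub_dotProduct]
    ring
  rw [expand]
  nlinarith [hβu, hαu]
end

section
/- Let p be a positive integer, L, U ∈ ℝ^p, a ∈ ℝ^n, b ∈ ℝ, d ∈ ℝ^p, z ∈ ℝ^n, V ∈ ℝ^{n×p}, and let S ⊆ [p] be a set of indices. Consider the semi-bounded uncertainty set 𝒰 = {u ∈ ℝ^p : u_k ≤ U_k for k ∈ S, and L_k ≤ u_k ≤ U_k for k ∉ S} (coordinates in S are unbounded from below). If there exist α, β ∈ ℝ^p with α ≥ 0, β ≥ 0, β − α = Vᵀa − d, α_k = 0 for all k ∈ S, and aᵀz + Uᵀβ − ∑_{k∉S} L_k α_k ≤ b, then aᵀ(z + V u) ≤ b + dᵀu for every u ∈ 𝒰. -/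
open Matrix

/-- **Semi-bounded support robust counterpart.** Coordinates `k ∈ S` are unbounded from
below (only `u_k ≤ U_k`), the rest satisfy `L_k ≤ u_k ≤ U_k`. If `α, β ≥ 0`,
`β − α = Vᵀa − d`, `α_k = 0` for `k ∈ S`, and `aᵀz + Uᵀβ − ∑_{k∉S} L_k α_k ≤ b`, then
`aᵀ(z + V u) ≤ b + dᵀu` for all `u` in the semi-bounded set. -/
theorem semibounded_robust_counterpart {p n : ℕ} (hp : 0 < p)
    (L U : Fin p → ℝ)
    (a : Fin n → ℝ) (b : ℝ) (d : Fin p → ℝ)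
    (z : Fin n → ℝ) (V : Matrix (Fin n) (Fin p) ℝ)
    (S : Finset (Fin p))
    (α β : Fin p → ℝ)
    (hα : ∀ k, 0 ≤ α k) (hβ : ∀ k, 0 ≤ β k)
    (hbal : β - α = Vᵀ *ᵥ a - d)
    (hαS : ∀ k ∈ S, α k = 0)
    (hrc : a ⬝ᵥ z + U ⬝ᵥ β - ∑ k ∈ Sᶜ, L k * α k ≤ b) :
    ∀ u : Fin p → ℝ,
      (∀ k ∈ S, u k ≤ U k) → (∀ k ∉ S, L k ≤ u k ∧ u k ≤ U k) →
      a ⬝ᵥ (z + V *ᵥ u) ≤ b + d ⬝ᵥ u := by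
  intro u hS hSc
  have key : a ⬝ᵥ (V *ᵥ u) = d ⬝ᵥ u + (∑ k, β k * u k - ∑ k, α k * u k) := by
    have h1 : a ⬝ᵥ (V *ᵥ u) = (Vᵀ *ᵥ a) ⬝ᵥ u := by
      rw [dotProduct_mulVec, mulVec_transpose]
    have h2 : Vᵀ *ᵥ a = β - α + d := by
      exact sub_eq_iff_eq_add.mp hbal.symm
    rw [h1, h2, add_dotProduct, sub_dotProduct]
    simp [dotProduct, Finset.sum_sub_distrib]
    ring
  have hb : ∑ k, β k * u k ≤ U ⬝ᵥ β := by
    rw [dotProduct]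
    apply Finset.sum_le_sum
    intro k _
    have huk : u k ≤ U k := by
      by_cases hk : k ∈ S
      · exact hS k hk
      · exact (hSc k hk).2
    nlinarith [hβ k]
  have ha : ∑ k ∈ Sᶜ, L k * α k ≤ ∑ k, α k * u k := by
    have : ∑ k, α k * u k = ∑ k ∈ Sᶜ, α k * u k := by
      rw [← Finset.sum_compl_add_sum Sᶜ]
      simp only [compl_compl]
      rw [Finset.sum_eq_zero (fun k hk => by rw [hαS k hk, zero_mul]), zero_add]
    rw [this]
    apply Finset.sum_le_sum
    intro k hk
    have hk' : k ∉ S := Finset.mem_compl.mp hk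
    nlinarith [hα k, (hSc k hk').1]
  have expand : a ⬝ᵥ (z + V *ᵥ u) = a ⬝ᵥ z + a ⬝ᵥ (V *ᵥ u) := by
    rw [dotProduct_add]
  rw [expand, key]
  linarith
end

section
/- Let u₁, …, u_p be independent real-valued random variables, each with mean zero and taking values in [−1, 1] almost surely. Let a ∈ ℝ^n, b ∈ ℝ, d ∈ ℝ^p, z ∈ ℝ^n, V ∈ ℝ^{n×p}, and ρ > 0. If the ball robust counterpart aᵀz + ρ‖Vᵀa − d‖₂ ≤ b holds, then ℙ[aᵀ(z + V u) ≤ b + dᵀu] ≥ 1 − exp(−ρ²/2). -/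
open Matrix MeasureTheory ProbabilityTheory

private lemma ball_hoeffding_aux (t x : ℝ) (hx : x ∈ Set.Icc (-1 : ℝ) 1) :
    Real.exp (t * x) ≤ Real.cosh t + x * Real.sinh t := by
  have h := convexOn_exp.2 (Set.mem_univ (-t)) (Set.mem_univ t)
    (by linarith [hx.2] : (0:ℝ) ≤ (1 - x) / 2)
    (by linarith [hx.1] : (0:ℝ) ≤ (1 + x) / 2) (by ring)
  simp only [smul_eq_mul] at h
  have harg : (1 - x) / 2 * (-t) + (1 + x) / 2 * t = t * x := by ring
  rw [harg] at h
  calc Real.exp (t * x) ≤ (1 - x) / 2 * Real.exp (-t) + (1 + x) / 2 * Real.exp t := h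
    _ = Real.cosh t + x * Real.sinh t := by rw [Real.cosh_eq, Real.sinh_eq]; ring

private lemma ball_hoeffding_mgf {Ω : Type*} [MeasurableSpace Ω] (P : Measure Ω)
    [IsProbabilityMeasure P] (X : Ω → ℝ) (hX : Measurable X)
    (hmean : ∫ ω, X ω ∂P = 0) (hb : ∀ᵐ ω ∂P, X ω ∈ Set.Icc (-1 : ℝ) 1) (t : ℝ) :
    mgf X P t ≤ Real.exp (t ^ 2 / 2) := by
  have hXint : Integrable X P := by
    refine (integrable_const (1 : ℝ)).mono' hX.aestronglyMeasurable ?_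
    filter_upwards [hb] with ω h
    rw [Real.norm_eq_abs]; exact abs_le.mpr ⟨h.1, h.2⟩
  have hint1 : Integrable (fun ω => Real.exp (t * X ω)) P := by
    refine (integrable_const (Real.exp |t|)).mono' ((hX.const_mul t).exp).aestronglyMeasurable ?_
    filter_upwards [hb] with ω h
    rw [Real.norm_eq_abs, Real.abs_exp]
    refine Real.exp_le_exp.mpr ?_
    calc t * X ω ≤ |t * X ω| := le_abs_self _
      _ = |t| * |X ω| := abs_mul _ _
      _ ≤ |t| * 1 := by
          exact mul_le_mul_of_nonneg_left (abs_le.mpr ⟨h.1, h.2⟩) (abs_nonneg t)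
      _ = |t| := mul_one _
  have hint2 : Integrable (fun ω => Real.cosh t + X ω * Real.sinh t) P :=
    (integrable_const _).add (hXint.mul_const _)
  have h2 : ∫ ω, (Real.cosh t + X ω * Real.sinh t) ∂P = Real.cosh t := by
    rw [integral_add (integrable_const _) (hXint.mul_const _), integral_const,
      integral_mul_const, hmean]
    simp
  calc mgf X P t = ∫ ω, Real.exp (t * X ω) ∂P := rfl
    _ ≤ ∫ ω, (Real.cosh t + X ω * Real.sinh t) ∂P := by
        refine integral_mono_ae hint1 hint2 ?_
        filter_upwards [hb] with ω h using ball_hoeffding_aux t (X ω) h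
    _ = Real.cosh t := h2
    _ ≤ Real.exp (t ^ 2 / 2) := Real.cosh_le_exp_half_sq t

/-- **Ball robust counterpart ⇒ distribution-free guarantee.** If `u₁,…,u_p` are
independent, mean-zero, `[−1,1]`-valued random variables and
`aᵀz + ρ‖Vᵀa − d‖₂ ≤ b`, then `ℙ[aᵀ(z + Vu) ≤ b + dᵀu] ≥ 1 − exp(−ρ²/2)`. -/
theorem ball_rc_probabilistic_guarantee {p n : ℕ}
    {Ω : Type*} [MeasurableSpace Ω] (P : Measure Ω) [IsProbabilityMeasure P]
    (u : Fin p → Ω → ℝ)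
    (hmeas : ∀ k, Measurable (u k))
    (hindep : iIndepFun u P)
    (hmean : ∀ k, ∫ ω, u k ω ∂P = 0)
    (hbdd : ∀ k, ∀ᵐ ω ∂P, u k ω ∈ Set.Icc (-1 : ℝ) 1)
    (a : Fin n → ℝ) (b : ℝ) (d : Fin p → ℝ)
    (z : Fin n → ℝ) (V : Matrix (Fin n) (Fin p) ℝ)
    (ρ : ℝ) (hρ : 0 < ρ)
    (hrc : a ⬝ᵥ z + ρ * Real.sqrt (∑ k, (Vᵀ *ᵥ a - d) k ^ 2) ≤ b) :
    P {ω | a ⬝ᵥ (z + V *ᵥ fun k => u k ω) ≤ b + d ⬝ᵥ fun k => u k ω} ≥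
      ENNReal.ofReal (1 - Real.exp (-ρ ^ 2 / 2)) := by
  classical
  set w : Fin p → ℝ := fun k => (Vᵀ *ᵥ a - d) k with hw
  set N : ℝ := Real.sqrt (∑ k, w k ^ 2) with hN
  have hNnonneg : 0 ≤ N := Real.sqrt_nonneg _
  -- pointwise reformulation of the event
  have hpt : ∀ x : Fin p → ℝ,
      (a ⬝ᵥ (z + V *ᵥ x) ≤ b + d ⬝ᵥ x ↔ a ⬝ᵥ z + ∑ k, w k * x k ≤ b) := by
    intro x
    have h1 : a ⬝ᵥ (z + V *ᵥ x) = a ⬝ᵥ z + (Vᵀ *ᵥ a) ⬝ᵥ x := by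
      rw [dotProduct_add, Matrix.dotProduct_mulVec, Matrix.mulVec_transpose]
    have h2 : (∑ k, w k * x k) = (Vᵀ *ᵥ a) ⬝ᵥ x - d ⬝ᵥ x := by
      simp only [hw, dotProduct, Pi.sub_apply, sub_mul, Finset.sum_sub_distrib]
    rw [h1, h2]
    constructor <;> intro h <;> linarith
  have hset : {ω | a ⬝ᵥ (z + V *ᵥ fun k => u k ω) ≤ b + d ⬝ᵥ fun k => u k ω}
      = {ω | a ⬝ᵥ z + ∑ k, w k * u k ω ≤ b} := by
    ext ω; exact hpt (fun k => u k ω)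
  rw [hset]
  by_cases hN0 : N = 0
  · -- all w k = 0
    have hsum0 : ∑ k, w k ^ 2 = 0 :=
      le_antisymm (Real.sqrt_eq_zero'.mp hN0) (Finset.sum_nonneg fun k _ => sq_nonneg _)
    have hwk : ∀ k, w k = 0 := by
      intro k
      have := (Finset.sum_eq_zero_iff_of_nonneg (fun k _ => sq_nonneg (w k))).mp hsum0 k
        (Finset.mem_univ k)
      exact (pow_eq_zero_iff two_ne_zero).mp this
    have : {ω | a ⬝ᵥ z + ∑ k, w k * u k ω ≤ b} = Set.univ := by
      ext ω
      simp only [Set.mem_setOf_eq, Set.mem_univ, iff_true]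
      have : (∑ k, w k * u k ω) = 0 := by
        apply Finset.sum_eq_zero; intro k _; rw [hwk k, zero_mul]
      rw [this, add_zero]
      nlinarith [hrc, hNnonneg, hρ.le]
    rw [this, measure_univ]
    exact ENNReal.ofReal_le_one.mpr (by linarith [Real.exp_pos (-ρ ^ 2 / 2)])
  · have hNpos : 0 < N := lt_of_le_of_ne hNnonneg (Ne.symm hN0)
    set t : ℝ := ρ / N with ht
    have htpos : 0 < t := div_pos hρ hNpos
    set S : Ω → ℝ := fun ω => ∑ k, w k * u k ω with hS
    have hSmeas : Measurable S := by
      apply Finset.measurable_sum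
      intro k _
      exact (hmeas k).const_mul (w k)
    -- the bad event
    have hcompl_sub : {ω | a ⬝ᵥ z + S ω ≤ b}ᶜ ⊆ {ω | ρ * N ≤ S ω} := by
      intro ω hω
      simp only [Set.mem_compl_iff, Set.mem_setOf_eq, not_le] at hω ⊢
      nlinarith [hrc]
    -- independence of scaled variables
    have hXindep : iIndepFun
        (fun k => (fun y => w k * y) ∘ u k) P :=
      hindep.comp _ (fun k => measurable_const_mul (w k))
    have hXmeas : ∀ k, Measurable ((fun y => w k * y) ∘ u k) :=
      fun k => (measurable_const_mul (w k)).comp (hmeas k)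
    have hmgf_sum : mgf S P t = ∏ k, mgf ((fun y => w k * y) ∘ u k) P t := by
      have := hXindep.mgf_sum (t := t) hXmeas Finset.univ
      have hSeq : S = ∑ k, (fun y => w k * y) ∘ u k := by
        ext ω; simp [hS, Function.comp]
      rw [hSeq, this]
    have hmgf_each : ∀ k, mgf ((fun y => w k * y) ∘ u k) P t
        = mgf (u k) P (t * w k) := by
      intro k
      unfold mgf
      congr 1
      ext ω
      simp [Function.comp, mul_assoc, mul_comm, mul_left_comm]
    have hmgf_bound : mgf S P t ≤ Real.exp (t ^ 2 * N ^ 2 / 2) := by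
      rw [hmgf_sum]
      have h1 : ∀ k ∈ Finset.univ, mgf ((fun y => w k * y) ∘ u k) P t
          ≤ Real.exp ((t * w k) ^ 2 / 2) := by
        intro k _
        rw [hmgf_each k]
        exact ball_hoeffding_mgf P (u k) (hmeas k) (hmean k) (hbdd k) (t * w k)
      calc (∏ k, mgf ((fun y => w k * y) ∘ u k) P t)
          ≤ ∏ k, Real.exp ((t * w k) ^ 2 / 2) :=
            Finset.prod_le_prod (fun k _ => mgf_nonneg) h1
        _ = Real.exp (∑ k, (t * w k) ^ 2 / 2) := by rw [Real.exp_sum]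
        _ = Real.exp (t ^ 2 * N ^ 2 / 2) := by
            congr 1
            rw [hN, Real.sq_sqrt (Finset.sum_nonneg fun k _ => sq_nonneg _),
              ← Finset.sum_div, Finset.mul_sum]
            congr 1
            exact Finset.sum_congr rfl fun k _ => by ring
    -- integrability of exp(t * S)
    have hbdd_all : ∀ᵐ ω ∂P, ∀ k, u k ω ∈ Set.Icc (-1 : ℝ) 1 :=
      (ae_all_iff).mpr hbdd
    have hint : Integrable (fun ω => Real.exp (t * S ω)) P := by
      refine (integrable_const (Real.exp (|t| * ∑ k, |w k|))).mono'
        ((hSmeas.const_mul t).exp).aestronglyMeasurable ?_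
      filter_upwards [hbdd_all] with ω h
      rw [Real.norm_eq_abs, Real.abs_exp]
      refine Real.exp_le_exp.mpr ?_
      have hSb : |S ω| ≤ ∑ k, |w k| := by
        calc |S ω| ≤ ∑ k, |w k * u k ω| := Finset.abs_sum_le_sum_abs _ _
          _ ≤ ∑ k, |w k| := by
              refine Finset.sum_le_sum fun k _ => ?_
              rw [abs_mul]
              calc |w k| * |u k ω| ≤ |w k| * 1 :=
                    mul_le_mul_of_nonneg_left (abs_le.mpr ⟨(h k).1, (h k).2⟩) (abs_nonneg _)
                _ = |w k| := mul_one _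
      calc t * S ω ≤ |t * S ω| := le_abs_self _
        _ = |t| * |S ω| := abs_mul _ _
        _ ≤ |t| * ∑ k, |w k| := mul_le_mul_of_nonneg_left hSb (abs_nonneg t)
    -- Chernoff bound
    have hchernoff := measure_ge_le_exp_mul_mgf (μ := P) (X := S) (ρ * N) htpos.le hint
    have htail : (P {ω | ρ * N ≤ S ω}).toReal ≤ Real.exp (-ρ ^ 2 / 2) := by
      refine hchernoff.trans ?_
      calc Real.exp (-t * (ρ * N)) * mgf S P t
          ≤ Real.exp (-t * (ρ * N)) * Real.exp (t ^ 2 * N ^ 2 / 2) :=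
            mul_le_mul_of_nonneg_left hmgf_bound (Real.exp_pos _).le
        _ = Real.exp (-t * (ρ * N) + t ^ 2 * N ^ 2 / 2) := (Real.exp_add _ _).symm
        _ = Real.exp (-ρ ^ 2 / 2) := by
            congr 1
            rw [ht]
            field_simp
            ring
    -- conclude
    have hEmeas : MeasurableSet {ω | a ⬝ᵥ z + S ω ≤ b} :=
      measurableSet_le (measurable_const.add hSmeas) measurable_const
    have hcompl_bound : (P {ω | a ⬝ᵥ z + S ω ≤ b}ᶜ).toReal ≤ Real.exp (-ρ ^ 2 / 2) := by
      refine le_trans ?_ htail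
      exact ENNReal.toReal_mono (measure_ne_top _ _) (measure_mono hcompl_sub)
    have hE : 1 - Real.exp (-ρ ^ 2 / 2) ≤ (P {ω | a ⬝ᵥ z + S ω ≤ b}).toReal := by
      have hcompl : (P {ω | a ⬝ᵥ z + S ω ≤ b}).toReal
          = 1 - (P {ω | a ⬝ᵥ z + S ω ≤ b}ᶜ).toReal := by
        rw [measure_compl hEmeas (measure_ne_top _ _)]
        rw [ENNReal.toReal_sub_of_le (measure_mono (Set.subset_univ _)) (measure_ne_top _ _)]
        simp
      rw [hcompl]
      linarith
    exact ENNReal.ofReal_le_of_le_toReal hE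
end

section
/- Let u₁, …, u_p be independent real-valued random variables, each with mean zero and taking values in [−1, 1] almost surely. Let a ∈ ℝ^n, b ∈ ℝ, d ∈ ℝ^p, z ∈ ℝ^n, V ∈ ℝ^{n×p}, and ε ∈ (0, 1). If the ball robust counterpart aᵀz + ρ‖Vᵀa − d‖₂ ≤ b holds with ρ = √(2 ln(1/ε)), then ℙ[aᵀ(z + V u) ≤ b + dᵀu] ≥ 1 − ε. -/
open Matrix MeasureTheory ProbabilityTheory Real

lemma integrable_of_bdd {Ω : Type*} [MeasurableSpace Ω] {P : Measure Ω}
    [IsProbabilityMeasure P] {f : Ω → ℝ} (hf : Measurable f) {C : ℝ}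
    (h : ∀ᵐ ω ∂P, |f ω| ≤ C) : Integrable f P :=
  (integrable_const C).mono' hf.aestronglyMeasurable (h.mono fun ω h => by
    rwa [Real.norm_eq_abs])

lemma hoeffding_mgf {Ω : Type*} [MeasurableSpace Ω] {P : Measure Ω}
    [IsProbabilityMeasure P] {X : Ω → ℝ} (hX : Measurable X)
    (hb : ∀ᵐ ω ∂P, X ω ∈ Set.Icc (-1 : ℝ) 1) (hm : ∫ ω, X ω ∂P = 0) (t : ℝ) :
    mgf X P t ≤ Real.exp (t ^ 2 / 2) := by
  have hXint : Integrable X P := integrable_of_bdd hX (hb.mono fun ω h => abs_le.2 ⟨h.1, h.2⟩)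
  have hint : Integrable (fun ω => Real.exp (t * X ω)) P := by
    refine integrable_of_bdd ((hX.const_mul t).exp) (C := Real.exp |t|) ?_
    filter_upwards [hb] with ω h
    rw [abs_of_pos (Real.exp_pos _)]
    refine Real.exp_le_exp.2 <| (le_abs_self _).trans ?_
    rw [abs_mul]
    exact mul_le_of_le_one_right (abs_nonneg t) (abs_le.2 ⟨h.1, h.2⟩)
  have key : mgf X P t ≤ Real.cosh t := by
    have hle : ∀ᵐ ω ∂P, Real.exp (t * X ω) ≤
        Real.cosh t + X ω * ((Real.exp t - Real.exp (-t)) / 2) := by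
      filter_upwards [hb] with ω h
      have h1 : (0:ℝ) ≤ (1 - X ω) / 2 := by linarith [h.2]
      have h2 : (0:ℝ) ≤ (1 + X ω) / 2 := by linarith [h.1]
      have hc := convexOn_exp.2 (Set.mem_univ (-t)) (Set.mem_univ t) h1 h2 (by ring)
      have heq : -((1 - X ω) / 2 * t) + (1 + X ω) / 2 * t = t * X ω := by ring
      have hle' : Real.exp (t * X ω) ≤
          (1 - X ω) / 2 * Real.exp (-t) + (1 + X ω) / 2 * Real.exp t := by
        simpa [smul_eq_mul, heq] using hc
      rw [Real.cosh_eq]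
      linarith
    have hint2 : Integrable
        (fun ω => Real.cosh t + X ω * ((Real.exp t - Real.exp (-t)) / 2)) P :=
      (integrable_const _).add (hXint.mul_const _)
    have := integral_mono_ae hint hint2 hle
    rw [integral_add (integrable_const _) (hXint.mul_const _), integral_const,
      integral_mul_const, hm] at this
    simpa [mgf] using this
  exact key.trans (Real.cosh_le_exp_half_sq t)

/-- **Calibrated ball robust counterpart.** If `u₁,…,u_p` are independent, mean-zero,
`[−1,1]`-valued random variables and `aᵀz + ρ‖Vᵀa − d‖₂ ≤ b` holds with
`ρ = √(2 ln(1/ε))`, then `ℙ[aᵀ(z + Vu) ≤ b + dᵀu] ≥ 1 − ε`. -/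
theorem ball_rc_epsilon_guarantee {p n : ℕ}
    {Ω : Type*} [MeasurableSpace Ω] (P : Measure Ω) [IsProbabilityMeasure P]
    (u : Fin p → Ω → ℝ)
    (hmeas : ∀ k, Measurable (u k))
    (hindep : iIndepFun u P)
    (hmean : ∀ k, ∫ ω, u k ω ∂P = 0)
    (hbdd : ∀ k, ∀ᵐ ω ∂P, u k ω ∈ Set.Icc (-1 : ℝ) 1)
    (a : Fin n → ℝ) (b : ℝ) (d : Fin p → ℝ)
    (z : Fin n → ℝ) (V : Matrix (Fin n) (Fin p) ℝ)
    (ε : ℝ) (hε0 : 0 < ε) (hε1 : ε < 1)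
    (hrc : a ⬝ᵥ z + Real.sqrt (2 * Real.log (1 / ε)) *
        Real.sqrt (∑ k, (Vᵀ *ᵥ a - d) k ^ 2) ≤ b) :
    P {ω | a ⬝ᵥ (z + V *ᵥ fun k => u k ω) ≤ b + d ⬝ᵥ fun k => u k ω} ≥
      ENNReal.ofReal (1 - ε) := by
  classical
  set w : Fin p → ℝ := Vᵀ *ᵥ a - d with hw
  -- rewrite the event
  have hsetEq : {ω | a ⬝ᵥ (z + V *ᵥ fun k => u k ω) ≤ b + d ⬝ᵥ fun k => u k ω}
      = {ω | a ⬝ᵥ z + ∑ k, w k * u k ω ≤ b} := by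
    ext ω
    simp only [Set.mem_setOf_eq, dotProduct_add]
    have h1 : a ⬝ᵥ (V *ᵥ fun k => u k ω) = ∑ k, (Vᵀ *ᵥ a) k * u k ω := by
      rw [Matrix.dotProduct_mulVec, ← Matrix.mulVec_transpose]
      rfl
    have h2 : (d ⬝ᵥ fun k => u k ω) = ∑ k, d k * u k ω := rfl
    have h3 : ∑ k, w k * u k ω = ∑ k, (Vᵀ *ᵥ a) k * u k ω - ∑ k, d k * u k ω := by
      rw [← Finset.sum_sub_distrib]
      exact Finset.sum_congr rfl fun k _ => by simp [hw, Pi.sub_apply]; ring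
    rw [h1, h2]
    constructor <;> intro h <;> linarith [h3]
  rw [hsetEq]
  set W2 : ℝ := ∑ k, w k ^ 2 with hW2
  have hW2nonneg : 0 ≤ W2 := Finset.sum_nonneg fun k _ => sq_nonneg _
  have hEmeas : MeasurableSet {ω | a ⬝ᵥ z + ∑ k, w k * u k ω ≤ b} := by
    apply measurableSet_le
    · exact (measurable_const.add (Finset.measurable_sum _ fun k _ =>
        (hmeas k).const_mul (w k)))
    · exact measurable_const
  by_cases hW20 : W2 = 0
  · -- all weights vanish
    have hwz : ∀ k, w k = 0 := by
      intro k
      have := (Finset.sum_eq_zero_iff_of_nonneg fun i _ => sq_nonneg (w i)).1 hW20 k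
        (Finset.mem_univ k)
      exact pow_eq_zero_iff (two_ne_zero) |>.1 this
    have : {ω | a ⬝ᵥ z + ∑ k, w k * u k ω ≤ b} = Set.univ := by
      ext ω
      simp only [Set.mem_setOf_eq, Set.mem_univ, iff_true]
      have hz : ∑ k, w k * u k ω = 0 := Finset.sum_eq_zero fun k _ => by rw [hwz k]; ring
      rw [hz, add_zero]
      have hsq : Real.sqrt (∑ k, (Vᵀ *ᵥ a - d) k ^ 2) = 0 := by
        rw [← hw, ← hW2, hW20, Real.sqrt_zero]
      nlinarith [hrc, Real.sqrt_nonneg (2 * Real.log (1 / ε)), hsq]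
    rw [this, measure_univ]
    exact ENNReal.ofReal_le_one.2 (by linarith)
  · have hW2pos : 0 < W2 := lt_of_le_of_ne hW2nonneg (Ne.symm hW20)
    set sW : ℝ := Real.sqrt W2 with hsW
    have hsWpos : 0 < sW := Real.sqrt_pos.2 hW2pos
    set ρ : ℝ := Real.sqrt (2 * Real.log (1 / ε)) with hρ
    have hlog : 0 ≤ Real.log (1 / ε) :=
      Real.log_nonneg (one_le_one_div hε0 hε1.le)
    have hρ0 : 0 ≤ ρ := Real.sqrt_nonneg _
    have hρsq : ρ ^ 2 = 2 * Real.log (1 / ε) := Real.sq_sqrt (by linarith)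
    set t : ℝ := ρ / sW with ht
    have ht0 : 0 ≤ t := div_nonneg hρ0 hsWpos.le
    set X : Fin p → Ω → ℝ := fun k ω => w k * u k ω with hX
    have hXmeas : ∀ k, Measurable (X k) := fun k => (hmeas k).const_mul (w k)
    have hXindep : iIndepFun X P :=
      hindep.comp (fun k x => w k * x) (fun k => measurable_const_mul (w k))
    have hXint : ∀ k, Integrable (fun ω => Real.exp (t * X k ω)) P := by
      intro k
      refine integrable_of_bdd ((hXmeas k).const_mul t).exp (C := Real.exp (|t * w k|)) ?_
      filter_upwards [hbdd k] with ω h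
      rw [abs_of_pos (Real.exp_pos _)]
      refine Real.exp_le_exp.2 <| (le_abs_self _).trans ?_
      rw [hX]
      rw [show t * (w k * u k ω) = (t * w k) * u k ω by ring, abs_mul]
      exact mul_le_of_le_one_right (abs_nonneg _) (abs_le.2 ⟨h.1, h.2⟩)
    -- mgf bound for each summand
    have hmgfk : ∀ k, mgf (X k) P t ≤ Real.exp (t ^ 2 * w k ^ 2 / 2) := by
      intro k
      have heq : mgf (X k) P t = mgf (u k) P (t * w k) := by
        simp only [mgf, hX, mul_assoc]
      rw [heq]
      have := hoeffding_mgf (hmeas k) (hbdd k) (hmean k) (t * w k)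
      calc mgf (u k) P (t * w k) ≤ Real.exp ((t * w k) ^ 2 / 2) := this
        _ = Real.exp (t ^ 2 * w k ^ 2 / 2) := by rw [mul_pow]
    -- mgf of the sum
    have hmgfS : mgf (∑ k, X k) P t ≤ Real.exp (t ^ 2 * W2 / 2) := by
      rw [hXindep.mgf_sum hXmeas]
      calc ∏ k, mgf (X k) P t ≤ ∏ k, Real.exp (t ^ 2 * w k ^ 2 / 2) :=
            Finset.prod_le_prod (fun k _ => mgf_nonneg) (fun k _ => hmgfk k)
        _ = Real.exp (∑ k, t ^ 2 * w k ^ 2 / 2) := by rw [Real.exp_sum]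
        _ = Real.exp (t ^ 2 * W2 / 2) := by
            congr 1
            rw [hW2, Finset.mul_sum, Finset.sum_div]
    -- integrability of exp (t * sum)
    have hsum_eq : (∑ k, X k) = fun ω => ∑ k, X k ω := by
      funext ω; exact Finset.sum_apply ω Finset.univ X
    have hSint : Integrable (fun ω => Real.exp (t * (∑ k, X k) ω)) P := by
      rw [hsum_eq]
      refine integrable_of_bdd ?_ (C := Real.exp (|t| * ∑ k, |w k|)) ?_
      · exact ((Finset.measurable_sum _ fun k _ => hXmeas k).const_mul t).exp
      · have hball : ∀ᵐ ω ∂P, ∀ k, u k ω ∈ Set.Icc (-1:ℝ) 1 := ae_all_iff.2 hbdd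
        filter_upwards [hball] with ω h
        rw [abs_of_pos (Real.exp_pos _)]
        refine Real.exp_le_exp.2 <| (le_abs_self _).trans ?_
        rw [abs_mul]
        refine mul_le_mul_of_nonneg_left ?_ (abs_nonneg t)
        refine (Finset.abs_sum_le_sum_abs _ _).trans (Finset.sum_le_sum fun k _ => ?_)
        rw [hX, abs_mul]
        exact mul_le_of_le_one_right (abs_nonneg _) (abs_le.2 ⟨(h k).1, (h k).2⟩)
    -- Chernoff
    set s : ℝ := ρ * sW with hs
    have hchern := measure_ge_le_exp_mul_mgf (μ := P) (X := ∑ k, X k) s ht0 hSint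
    have hval : Real.exp (-t * s) * mgf (∑ k, X k) P t ≤ ε := by
      have h1 : Real.exp (-t * s) * mgf (∑ k, X k) P t ≤
          Real.exp (-t * s) * Real.exp (t ^ 2 * W2 / 2) :=
        mul_le_mul_of_nonneg_left hmgfS (Real.exp_pos _).le
      have hW2s : sW ^ 2 = W2 := Real.sq_sqrt hW2nonneg
      have hts : t * s = ρ ^ 2 := by
        rw [ht, hs]
        field_simp
      have ht2 : t ^ 2 * W2 = ρ ^ 2 := by
        rw [ht, div_pow, hW2s, div_mul_cancel₀ _ hW20]
      have h2 : -t * s + t ^ 2 * W2 / 2 = -(ρ ^ 2) / 2 := by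
        rw [neg_mul, hts, ht2]
        ring
      have h3 : Real.exp (-t * s) * Real.exp (t ^ 2 * W2 / 2) = ε := by
        rw [← Real.exp_add, h2, hρsq]
        rw [show -(2 * Real.log (1 / ε)) / 2 = -Real.log (1/ε) by ring]
        rw [Real.exp_neg, Real.exp_log (by positivity), one_div, inv_inv]
      linarith
    -- complement bound
    have hcompl : {ω | a ⬝ᵥ z + ∑ k, w k * u k ω ≤ b}ᶜ ⊆ {ω | s ≤ (∑ k, X k) ω} := by
      intro ω hω
      simp only [Set.mem_compl_iff, Set.mem_setOf_eq, not_le] at hω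
      simp only [Set.mem_setOf_eq, hsum_eq]
      have hrc' : a ⬝ᵥ z + ρ * sW ≤ b := hrc
      have heq : (∑ k, X k ω) = ∑ k, w k * u k ω := rfl
      rw [heq]
      linarith
    have hcomplP : P {ω | a ⬝ᵥ z + ∑ k, w k * u k ω ≤ b}ᶜ ≤ ENNReal.ofReal ε := by
      refine (measure_mono hcompl).trans ?_
      rw [← ENNReal.ofReal_toReal (measure_ne_top P _)]
      exact ENNReal.ofReal_le_ofReal (hchern.trans hval)
    have hP := prob_compl_eq_one_sub hEmeas (μ := P)
    have h1 : (1 : ENNReal) - P {ω | a ⬝ᵥ z + ∑ k, w k * u k ω ≤ b} ≤ ENNReal.ofReal ε := by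
      rw [← hP]; exact hcomplP
    have h2 : (1 : ENNReal) ≤ ENNReal.ofReal ε + P {ω | a ⬝ᵥ z + ∑ k, w k * u k ω ≤ b} :=
      tsub_le_iff_right.1 h1
    calc ENNReal.ofReal (1 - ε) = 1 - ENNReal.ofReal ε := by
          rw [ENNReal.ofReal_sub 1 hε0.le, ENNReal.ofReal_one]
      _ ≤ P {ω | a ⬝ᵥ z + ∑ k, w k * u k ω ≤ b} := tsub_le_iff_left.2 h2
end

section
/- Let u₁, …, u_p be independent real-valued random variables, each with mean zero and taking values in [−1, 1] almost surely. Let a ∈ ℝ^n, b ∈ ℝ, d ∈ ℝ^p, z ∈ ℝ^n, V ∈ ℝ^{n×p}, and Γ > 0. If there exists y ∈ ℝ^p such that the budget robust counterpart aᵀz + Γ‖Vᵀa − d − y‖_∞ + ‖y‖₁ ≤ b holds, then ℙ[aᵀ(z + V u) ≤ b + dᵀu] ≥ 1 − exp(−Γ²/(2p)). -/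
open Matrix MeasureTheory ProbabilityTheory

lemma integrable_exp_mul_of_abs_le {Ω : Type*} [MeasurableSpace Ω] {μ : Measure Ω}
    [IsProbabilityMeasure μ] {X : Ω → ℝ} (hX : Measurable X) {c : ℝ}
    (hb : ∀ᵐ ω ∂μ, |X ω| ≤ c) (t : ℝ) :
    Integrable (fun ω => Real.exp (t * X ω)) μ := by
  refine Integrable.mono' (integrable_const (Real.exp (|t| * c)))
    ((hX.const_mul t).exp).aestronglyMeasurable ?_
  filter_upwards [hb] with ω h
  rw [Real.norm_eq_abs, Real.abs_exp, Real.exp_le_exp]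
  calc t * X ω ≤ |t * X ω| := le_abs_self _
    _ = |t| * |X ω| := abs_mul _ _
    _ ≤ |t| * c := mul_le_mul_of_nonneg_left h (abs_nonneg t)

lemma mgf_le_cosh {Ω : Type*} [MeasurableSpace Ω] (μ : Measure Ω) [IsProbabilityMeasure μ]
    (X : Ω → ℝ) (hX : Measurable X) (hmean : ∫ ω, X ω ∂μ = 0)
    {c : ℝ} (hc : 0 ≤ c) (hb : ∀ᵐ ω ∂μ, |X ω| ≤ c) (s : ℝ) :
    mgf X μ s ≤ Real.cosh (s * c) := by
  rcases eq_or_lt_of_le hc with h0 | hcpos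
  · -- c = 0, so X = 0 a.e.
    have hX0 : ∀ᵐ ω ∂μ, X ω = 0 := by
      filter_upwards [hb] with ω h
      have : |X ω| ≤ 0 := by rw [h0]; exact h
      exact abs_nonpos_iff.mp this
    have hmgf : mgf X μ s = 1 := by
      unfold mgf
      rw [integral_congr_ae (g := fun _ => (1 : ℝ))
        (by filter_upwards [hX0] with ω h; simp [h])]
      simp
    rw [hmgf]
    exact Real.one_le_cosh _
  · have hXint : Integrable X μ :=
      Integrable.mono' (integrable_const c) hX.aestronglyMeasurable
        (by filter_upwards [hb] with ω h; simpa using h)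
    have hpt : ∀ᵐ ω ∂μ, Real.exp (s * X ω)
        ≤ Real.cosh (s * c) + (Real.sinh (s * c) / c) * X ω := by
      filter_upwards [hb] with ω h
      obtain ⟨h1, h2⟩ := abs_le.mp h
      have hc2 : (0:ℝ) < 2 * c := by linarith
      have hA : (0:ℝ) ≤ (c - X ω) / (2 * c) := div_nonneg (by linarith) hc2.le
      have hB : (0:ℝ) ≤ (c + X ω) / (2 * c) := div_nonneg (by linarith) hc2.le
      have hAB : (c - X ω) / (2 * c) + (c + X ω) / (2 * c) = 1 := by
        field_simp
        ring
      have hconv := convexOn_exp.2 (Set.mem_univ (-(s * c))) (Set.mem_univ (s * c)) hA hB hAB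
      simp only [smul_eq_mul] at hconv
      have e1 : (c - X ω) / (2 * c) * -(s * c) + (c + X ω) / (2 * c) * (s * c) = s * X ω := by
        field_simp
        ring
      rw [e1] at hconv
      refine hconv.trans_eq ?_
      rw [Real.cosh_eq, Real.sinh_eq]
      field_simp
      ring
    have hIexp : Integrable (fun ω => Real.exp (s * X ω)) μ :=
      integrable_exp_mul_of_abs_le hX hb s
    have hIrhs : Integrable (fun ω => Real.cosh (s * c) + (Real.sinh (s * c) / c) * X ω) μ :=
      (integrable_const _).add (hXint.const_mul _)
    calc mgf X μ s ≤ ∫ ω, (Real.cosh (s * c) + (Real.sinh (s * c) / c) * X ω) ∂μ :=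
          integral_mono_ae hIexp hIrhs hpt
      _ = Real.cosh (s * c) := by
          rw [integral_add (integrable_const _) (hXint.const_mul _), MeasureTheory.integral_const_mul, hmean]
          simp

lemma mgf_le_exp_half_sq {Ω : Type*} [MeasurableSpace Ω] (μ : Measure Ω) [IsProbabilityMeasure μ]
    (X : Ω → ℝ) (hX : Measurable X) (hmean : ∫ ω, X ω ∂μ = 0)
    {c : ℝ} (hc : 0 ≤ c) (hb : ∀ᵐ ω ∂μ, |X ω| ≤ c) (s : ℝ) :
    mgf X μ s ≤ Real.exp (s ^ 2 * c ^ 2 / 2) := by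
  refine (mgf_le_cosh μ X hX hmean hc hb s).trans ?_
  have := Real.cosh_le_exp_half_sq (s * c)
  rwa [mul_pow] at this

/-- **Budget robust counterpart ⇒ distribution-free guarantee.** If `u₁,…,u_p` are
independent, mean-zero, `[−1,1]`-valued random variables and there is `y` with
`aᵀz + Γ‖Vᵀa − d − y‖_∞ + ‖y‖₁ ≤ b`, then
`ℙ[aᵀ(z + Vu) ≤ b + dᵀu] ≥ 1 − exp(−Γ²/(2p))`. -/
theorem budget_rc_probabilistic_guarantee {p n : ℕ} (hp : 0 < p)
    {Ω : Type*} [MeasurableSpace Ω] (P : Measure Ω) [IsProbabilityMeasure P]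
    (u : Fin p → Ω → ℝ)
    (hmeas : ∀ k, Measurable (u k))
    (hindep : iIndepFun u P)
    (hmean : ∀ k, ∫ ω, u k ω ∂P = 0)
    (hbdd : ∀ k, ∀ᵐ ω ∂P, u k ω ∈ Set.Icc (-1 : ℝ) 1)
    (a : Fin n → ℝ) (b : ℝ) (d : Fin p → ℝ)
    (z : Fin n → ℝ) (V : Matrix (Fin n) (Fin p) ℝ)
    (Γ : ℝ) (hΓ : 0 < Γ)
    (y : Fin p → ℝ)
    (hrc : a ⬝ᵥ z + Γ * ‖Vᵀ *ᵥ a - d - y‖ + ∑ k, |y k| ≤ b) :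
    P {ω | a ⬝ᵥ (z + V *ᵥ fun k => u k ω) ≤ b + d ⬝ᵥ fun k => u k ω} ≥
      ENNReal.ofReal (1 - Real.exp (-Γ ^ 2 / (2 * p))) := by
  classical
  set w : Fin p → ℝ := Vᵀ *ᵥ a - d - y with hw
  set M : ℝ := ‖w‖ with hM
  set A : Set Ω := {ω | a ⬝ᵥ (z + V *ᵥ fun k => u k ω) ≤ b + d ⬝ᵥ fun k => u k ω} with hA
  set X : Fin p → Ω → ℝ := fun k ω => w k * u k ω with hXdef
  set S : Ω → ℝ := fun ω => ∑ k, X k ω with hS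
  -- the key algebraic identity
  have halg : ∀ v : Fin p → ℝ,
      a ⬝ᵥ (z + V *ᵥ v) - (b + d ⬝ᵥ v) = (a ⬝ᵥ z - b) + w ⬝ᵥ v + y ⬝ᵥ v := by
    intro v
    have h1 : a ⬝ᵥ (V *ᵥ v) = (Vᵀ *ᵥ a) ⬝ᵥ v := by
      rw [Matrix.mulVec_transpose, Matrix.dotProduct_mulVec]
    rw [dotProduct_add, h1, hw]
    simp [sub_dotProduct]
    ring
  have hb1 : ∀ᵐ ω ∂P, ∀ k, |u k ω| ≤ 1 := by
    rw [MeasureTheory.ae_all_iff]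
    intro k
    filter_upwards [hbdd k] with ω h
    exact abs_le.mpr ⟨h.1, h.2⟩
  -- a.e., failure implies a large deviation of S
  have hsub : ∀ᵐ ω ∂P, ω ∈ Aᶜ → Γ * M < S ω := by
    filter_upwards [hb1] with ω hu hω
    have hfail : ¬ (a ⬝ᵥ (z + V *ᵥ fun k => u k ω) ≤ b + d ⬝ᵥ fun k => u k ω) := hω
    push_neg at hfail
    have h2 := halg (fun k => u k ω)
    have hy : y ⬝ᵥ (fun k => u k ω) ≤ ∑ k, |y k| := by
      rw [dotProduct]
      refine Finset.sum_le_sum fun k _ => ?_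
      calc y k * u k ω ≤ |y k * u k ω| := le_abs_self _
        _ = |y k| * |u k ω| := abs_mul _ _
        _ ≤ |y k| * 1 := mul_le_mul_of_nonneg_left (hu k) (abs_nonneg _)
        _ = |y k| := mul_one _
    have hSw : w ⬝ᵥ (fun k => u k ω) = S ω := rfl
    have h3 : 0 < a ⬝ᵥ (z + V *ᵥ fun k => u k ω) - (b + d ⬝ᵥ fun k => u k ω) := by
      linarith
    rw [h2, hSw] at h3
    linarith
  -- it suffices to bound the failure probability
  suffices hfb : P Aᶜ ≤ ENNReal.ofReal (Real.exp (-Γ ^ 2 / (2 * p))) by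
    have h1 : (1 : ENNReal) ≤ P A + P Aᶜ := by
      rw [← measure_univ (μ := P), ← Set.union_compl_self A]
      exact measure_union_le _ _
    have h2 : ENNReal.ofReal (1 - Real.exp (-Γ ^ 2 / (2 * p)))
        = 1 - ENNReal.ofReal (Real.exp (-Γ ^ 2 / (2 * p))) := by
      rw [ENNReal.ofReal_sub _ (Real.exp_nonneg _), ENNReal.ofReal_one]
    rw [ge_iff_le, h2]
    calc 1 - ENNReal.ofReal (Real.exp (-Γ ^ 2 / (2 * p))) ≤ 1 - P Aᶜ :=
          tsub_le_tsub_left hfb 1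
      _ ≤ P A := by rw [tsub_le_iff_right]; exact h1
  -- bound the failure probability
  rcases eq_or_lt_of_le (norm_nonneg w) with hM0 | hMpos
  · -- M = 0 : w = 0, S = 0 and Aᶜ is a.e. empty
    have hw0 : w = 0 := norm_eq_zero.mp hM0.symm
    have : ∀ᵐ ω ∂P, ω ∉ Aᶜ := by
      filter_upwards [hsub] with ω h hω
      have := h hω
      rw [hM, ← hM0, mul_zero] at this
      simp only [hS, hXdef, hw0, Pi.zero_apply, zero_mul, Finset.sum_const_zero] at this
      linarith
    have : P Aᶜ = 0 := by
      rw [← MeasureTheory.measure_eq_zero_iff_ae_notMem] at this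
      exact this
    rw [this]
    exact zero_le
  · -- M > 0 : Chernoff bound
    have hMpos' : 0 < M := hMpos
    have hppos : (0:ℝ) < (p:ℝ) := Nat.cast_pos.mpr hp
    set t : ℝ := Γ / (p * M) with ht
    have htpos : 0 < t := div_pos hΓ (mul_pos hppos hMpos')
    have hXmeas : ∀ k, Measurable (X k) := fun k => (hmeas k).const_mul _
    have hXindep : iIndepFun X P := by
      have := hindep.comp (fun k (x : ℝ) => w k * x) (fun k => measurable_const_mul _)
      exact this
    have hXb : ∀ k, ∀ᵐ ω ∂P, |X k ω| ≤ |w k| := by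
      intro k
      filter_upwards [hbdd k] with ω h
      rw [hXdef]
      simp only
      rw [abs_mul]
      calc |w k| * |u k ω| ≤ |w k| * 1 :=
            mul_le_mul_of_nonneg_left (abs_le.mpr ⟨h.1, h.2⟩) (abs_nonneg _)
        _ = |w k| := mul_one _
    have hXint : ∀ k ∈ Finset.univ, Integrable (fun ω => Real.exp (t * X k ω)) P :=
      fun k _ => integrable_exp_mul_of_abs_le (hXmeas k) (hXb k) t
    have hSint : Integrable (fun ω => Real.exp (t * S ω)) P := by
      have := hindep.comp (fun k (x : ℝ) => w k * x) (fun k => measurable_const_mul _)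
      have h := iIndepFun.integrable_exp_mul_sum (μ := P) hXindep hXmeas hXint
      simpa [hS] using h
    have hXmean : ∀ k, ∫ ω, X k ω ∂P = 0 := by
      intro k
      rw [hXdef]
      simp only
      rw [MeasureTheory.integral_const_mul, hmean k, mul_zero]
    -- Chernoff
    have hch := measure_ge_le_exp_mul_mgf (μ := P) (X := S) (Γ * M) htpos.le hSint
    -- mgf of the sum is the product of mgfs
    have hmgfsum : mgf S P t = ∏ k, mgf (X k) P t := by
      have h := iIndepFun.mgf_sum (μ := P) (t := t) hXindep hXmeas Finset.univ
      have hSeq : S = ∑ k, X k := by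
        funext ω; rw [hS]; simp [Finset.sum_apply]
      rw [hSeq]; exact h
    have hmgfk : ∀ k, mgf (X k) P t ≤ Real.exp (t ^ 2 * (w k) ^ 2 / 2) := by
      intro k
      have := mgf_le_exp_half_sq P (X k) (hXmeas k) (hXmean k) (abs_nonneg (w k)) (hXb k) t
      rwa [sq_abs] at this
    have hprodle : ∏ k, mgf (X k) P t ≤ Real.exp (∑ k, t ^ 2 * (w k) ^ 2 / 2) := by
      rw [Real.exp_sum]
      exact Finset.prod_le_prod (fun k _ => mgf_nonneg) (fun k _ => hmgfk k)
    have hsumle : ∑ k : Fin p, t ^ 2 * (w k) ^ 2 / 2 ≤ t ^ 2 * (p * M ^ 2) / 2 := by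
      have hkk : ∀ k : Fin p, (w k) ^ 2 ≤ M ^ 2 := by
        intro k
        have h1 : |w k| ≤ M := by
          have := norm_le_pi_norm w k
          simpa [hM, Real.norm_eq_abs] using this
        calc (w k) ^ 2 = |w k| ^ 2 := (sq_abs _).symm
          _ ≤ M ^ 2 := pow_le_pow_left₀ (abs_nonneg _) h1 2
      calc ∑ k : Fin p, t ^ 2 * (w k) ^ 2 / 2 ≤ ∑ k : Fin p, t ^ 2 * M ^ 2 / 2 := by
            refine Finset.sum_le_sum fun k _ => ?_
            have := hkk k
            have ht2 : (0:ℝ) ≤ t ^ 2 := sq_nonneg t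
            nlinarith
        _ = (p : ℝ) * (t ^ 2 * M ^ 2 / 2) := by
            rw [Finset.sum_const, Finset.card_univ, Fintype.card_fin, nsmul_eq_mul]
        _ = t ^ 2 * (p * M ^ 2) / 2 := by ring
    -- combine the exponents
    have hexp : Real.exp (-t * (Γ * M)) * Real.exp (∑ k, t ^ 2 * (w k) ^ 2 / 2)
        ≤ Real.exp (-Γ ^ 2 / (2 * p)) := by
      rw [← Real.exp_add, Real.exp_le_exp]
      have he : -t * (Γ * M) + t ^ 2 * ((p:ℝ) * M ^ 2) / 2 = -Γ ^ 2 / (2 * p) := by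
        rw [ht]
        field_simp
        ring
      linarith [hsumle]
    have hfinal : (P {ω | Γ * M ≤ S ω}).toReal ≤ Real.exp (-Γ ^ 2 / (2 * p)) := by
      calc (P {ω | Γ * M ≤ S ω}).toReal ≤ Real.exp (-t * (Γ * M)) * mgf S P t := hch
        _ ≤ Real.exp (-t * (Γ * M)) * Real.exp (∑ k, t ^ 2 * (w k) ^ 2 / 2) := by
            rw [hmgfsum]
            exact mul_le_mul_of_nonneg_left hprodle (Real.exp_nonneg _)
        _ ≤ Real.exp (-Γ ^ 2 / (2 * p)) := hexp
    have hmono : P Aᶜ ≤ P {ω | Γ * M ≤ S ω} := by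
      refine measure_mono_ae ?_
      filter_upwards [hsub] with ω h hω
      exact (h hω).le
    refine hmono.trans ?_
    rw [ENNReal.le_ofReal_iff_toReal_le (measure_ne_top P _) (Real.exp_nonneg _)]
    exact hfinal
end
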